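/- Let G be a 1-subdivided star with center a, middle vertices b_1, …, b_n and leaves c_1, …, c_n, with weight function w satisfying w(c_1) ≥ w(c_2) ≥ … ≥ w(c_n), and w(b_i) ≤ w(b_j) whenever i ≤ j and w(c_i) = w(c_j). Then there exists a treedepth decomposition T of G of minimum weighted depth such that every c_k is a ≤_T-maximal element and the index set I = { i ≤ n : b_i <_T a } is an initial segment of {1, …, n}, i.e., for all i < j ≤ n, if j ∈ I then i ∈ I. -/

import Mathlib

/-- A treedepth decomposition of a simple graph `G`: a partial order `le` on the
vertices such that the set of elements below any vertex is linearly ordered, and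
the endpoints of every edge are comparable. -/
structure TDDecomp {V : Type*} (G : SimpleGraph V) where
  le : V → V → Prop
  le_refl : ∀ x, le x x
  le_antisymm : ∀ x y, le x y → le y x → x = y
  le_trans : ∀ x y z, le x y → le y z → le x z
  down_linear : ∀ x y z, le y x → le z x → le y z ∨ le z y
  adj_comparable : ∀ u v, G.Adj u v → le u v ∨ le v u

/-- A chain of a treedepth decomposition: a finite set of pairwise comparable vertices. -/
def TDDecomp.IsChain {V : Type*} {G : SimpleGraph V} (T : TDDecomp G) (C : Finset V) : Prop :=
  ∀ x ∈ C, ∀ y ∈ C, T.le x y ∨ T.le y x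

/-- The weighted depth of a treedepth decomposition: the maximum over all chains `C`
of the total weight of `C`. -/
noncomputable def TDDecomp.weightedDepth {V : Type*} {G : SimpleGraph V}
    (T : TDDecomp G) (w : V → ℕ) : ℕ :=
  sSup {s | ∃ C : Finset V, T.IsChain C ∧ s = C.sum w}

/-- The weighted treedepth of `G` with weight function `w`: the minimum weighted depth
over all treedepth decompositions of `G`. -/
noncomputable def wtd {V : Type*} (G : SimpleGraph V) (w : V → ℕ) : ℕ :=
  sInf {s | ∃ T : TDDecomp G, s = T.weightedDepth w}

/-- Vertices of a 1-subdivided star with `n` branches: the center `a`, the middle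
vertices `b_1, …, b_n` and the leaves `c_1, …, c_n`. -/
inductive StarV (n : ℕ) where
  | center : StarV n
  | mid : Fin n → StarV n
  | leaf : Fin n → StarV n

/-- The 1-subdivided star: edges are exactly `a b_i` and `b_i c_i` for `1 ≤ i ≤ n`. -/
def subdivStar (n : ℕ) : SimpleGraph (StarV n) :=
  SimpleGraph.fromRel (fun x y =>
    (∃ i, x = StarV.center ∧ y = StarV.mid i) ∨
    (∃ i, x = StarV.mid i ∧ y = StarV.leaf i))

namespace StarV

def equivSum (n : ℕ) : StarV n ≃ (Unit ⊕ Fin n ⊕ Fin n) where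
  toFun x := match x with
    | .center => Sum.inl ()
    | .mid i => Sum.inr (Sum.inl i)
    | .leaf i => Sum.inr (Sum.inr i)
  invFun x := match x with
    | Sum.inl _ => .center
    | Sum.inr (Sum.inl i) => .mid i
    | Sum.inr (Sum.inr i) => .leaf i
  left_inv x := by cases x <;> rfl
  right_inv x := by rcases x with _ | (_ | _) <;> rfl

instance (n : ℕ) : DecidableEq (StarV n) := (equivSum n).decidableEq
instance (n : ℕ) : Fintype (StarV n) := Fintype.ofEquiv _ (equivSum n).symm

end StarV

section Spine
variable {n : ℕ}

/-- the first `m` middle vertices, in order -/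
def spine (n m : ℕ) : List (StarV n) := ((List.finRange n).take m).map StarV.mid

lemma spine_succ {m : ℕ} (h : m < n) :
    spine n (m + 1) = spine n m ++ [StarV.mid ⟨m, h⟩] := by
  unfold spine
  rw [List.take_succ]
  have h' : m < (List.finRange n).length := by rw [List.length_finRange]; exact h
  rw [List.getElem?_eq_getElem h', List.getElem_finRange]
  simp [Fin.cast]

lemma spine_prefix {m m' : ℕ} (h : m ≤ m') : spine n m <+: spine n m' := by
  have : (List.finRange n).take m = ((List.finRange n).take m').take m := by
    rw [List.take_take, Nat.min_eq_left h]
  unfold spine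
  rw [this]
  exact (List.take_prefix _ _).map _

lemma mem_spine {x : StarV n} {m : ℕ} :
    x ∈ spine n m ↔ ∃ l : Fin n, l.1 < m ∧ x = StarV.mid l := by
  unfold spine
  simp only [List.mem_map, List.mem_take_iff_getElem, List.length_finRange,
    List.getElem_finRange]
  constructor
  · rintro ⟨l, ⟨i, hm, rfl⟩, rfl⟩
    exact ⟨_, lt_of_lt_of_le hm inf_le_left, rfl⟩
  · rintro ⟨l, hl, rfl⟩
    exact ⟨l, ⟨l.1, lt_inf_iff.2 ⟨hl, l.2⟩, by simp [Fin.cast]⟩, rfl⟩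

lemma mid_mem_spine {l : Fin n} {m : ℕ} :
    StarV.mid l ∈ spine n m ↔ l.1 < m := by
  rw [mem_spine]
  constructor
  · rintro ⟨l', h, he⟩; cases he; exact h
  · intro h; exact ⟨l, h, rfl⟩

lemma center_not_mem_spine {m : ℕ} : StarV.center ∉ spine n m := by
  rw [mem_spine]; rintro ⟨l, -, h⟩; cases h

lemma leaf_not_mem_spine {l : Fin n} {m : ℕ} : StarV.leaf l ∉ spine n m := by
  rw [mem_spine]; rintro ⟨l', -, h⟩; cases h

lemma nodup_spine {m : ℕ} : (spine n m).Nodup := by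
  refine List.Nodup.map (fun a b h => by cases h; rfl) ?_
  exact (List.nodup_finRange n).sublist (List.take_sublist _ _)

/-- The path from the root to `v` in the decomposition `Tₖ`. -/
def pathTo (n k : ℕ) : StarV n → List (StarV n)
  | .center => spine n k ++ [.center]
  | .mid i => if i.1 < k then spine n (i.1 + 1) else spine n k ++ [.center, .mid i]
  | .leaf i => if i.1 < k then spine n (i.1 + 1) ++ [.leaf i]
               else spine n k ++ [.center, .mid i, .leaf i]

variable {k : ℕ}

lemma pathTo_mid_lt {i : Fin n} (h : i.1 < k) :
    pathTo n k (StarV.mid i) = spine n i.1 ++ [StarV.mid i] := by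
  simp only [pathTo, if_pos h, spine_succ i.2, Fin.eta]

lemma pathTo_mid_ge {i : Fin n} (h : ¬ i.1 < k) :
    pathTo n k (StarV.mid i) = (spine n k ++ [StarV.center]) ++ [StarV.mid i] := by
  simp [pathTo, if_neg h]

lemma pathTo_leaf_eq (i : Fin n) :
    pathTo n k (StarV.leaf i) = pathTo n k (StarV.mid i) ++ [StarV.leaf i] := by
  by_cases h : i.1 < k <;> simp [pathTo, h]

lemma pathTo_concat (v : StarV n) : ∃ q, pathTo n k v = q ++ [v] := by
  cases v with
  | center => exact ⟨spine n k, rfl⟩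
  | mid i =>
    by_cases h : i.1 < k
    · exact ⟨spine n i.1, pathTo_mid_lt h⟩
    · exact ⟨spine n k ++ [StarV.center], pathTo_mid_ge h⟩
  | leaf i => exact ⟨pathTo n k (StarV.mid i), pathTo_leaf_eq i⟩

lemma self_mem_pathTo (v : StarV n) : v ∈ pathTo n k v := by
  obtain ⟨q, hq⟩ := pathTo_concat (k := k) v
  rw [hq]; simp

lemma pathTo_getLast? (v : StarV n) : (pathTo n k v).getLast? = some v := by
  obtain ⟨q, hq⟩ := pathTo_concat (k := k) v
  rw [hq, List.getLast?_concat]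

lemma pathTo_injective : Function.Injective (pathTo n k) := by
  intro x y h
  have := pathTo_getLast? (k := k) x
  rw [h, pathTo_getLast? y] at this
  exact (Option.some_inj.mp this).symm

lemma mem_pathTo_center {x : StarV n} :
    x ∈ pathTo n k StarV.center ↔ (∃ l : Fin n, l.1 < k ∧ x = StarV.mid l) ∨ x = StarV.center := by
  simp [pathTo, mem_spine]

lemma leaf_not_mem_pathTo_mid {l i : Fin n} : StarV.leaf l ∉ pathTo n k (StarV.mid i) := by
  by_cases hi : i.1 < k
  · rw [pathTo_mid_lt hi]
    simp [List.mem_append, leaf_not_mem_spine]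
  · rw [pathTo_mid_ge hi]
    simp [List.mem_append, leaf_not_mem_spine]

lemma leaf_mem_pathTo {l : Fin n} {v : StarV n} (h : StarV.leaf l ∈ pathTo n k v) :
    v = StarV.leaf l := by
  cases v with
  | center =>
    rw [mem_pathTo_center] at h
    rcases h with ⟨l', -, h⟩ | h <;> cases h
  | mid i => exact absurd h leaf_not_mem_pathTo_mid
  | leaf i =>
    rw [pathTo_leaf_eq, List.mem_append] at h
    rcases h with h | h
    · exact absurd h leaf_not_mem_pathTo_mid
    · simp at h
      rw [h]
end Spine

section TkSec
variable {n k : ℕ}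

lemma nodup_pathTo_center : (pathTo n k (StarV.center : StarV n)).Nodup := by
  show (spine n k ++ [StarV.center]).Nodup
  rw [List.nodup_append]
  refine ⟨nodup_spine, List.nodup_singleton _, fun a ha b hb hab => ?_⟩
  subst hab
  simp only [List.mem_singleton] at hb
  rw [hb] at ha
  exact center_not_mem_spine ha

lemma nodup_pathTo_mid (i : Fin n) : (pathTo n k (StarV.mid i)).Nodup := by
  by_cases hi : i.1 < k
  · rw [pathTo_mid_lt hi, List.nodup_append]
    refine ⟨nodup_spine, List.nodup_singleton _, fun a ha b hb hab => ?_⟩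
    subst hab
    simp only [List.mem_singleton] at hb
    rw [hb] at ha
    exact absurd (mid_mem_spine.1 ha) (lt_irrefl _)
  · rw [pathTo_mid_ge hi, List.nodup_append]
    refine ⟨nodup_pathTo_center (k := k), List.nodup_singleton _, fun a ha b hb hab => ?_⟩
    subst hab
    simp only [List.mem_singleton] at hb
    rw [hb] at ha
    rcases List.mem_append.1 ha with h | h
    · exact hi (mid_mem_spine.1 h)
    · simp at h

lemma nodup_pathTo (v : StarV n) : (pathTo n k v).Nodup := by
  cases v with
  | center => exact nodup_pathTo_center
  | mid i => exact nodup_pathTo_mid i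
  | leaf i =>
    rw [pathTo_leaf_eq, List.nodup_append]
    refine ⟨nodup_pathTo_mid i, List.nodup_singleton _, fun a ha b hb hab => ?_⟩
    subst hab
    simp only [List.mem_singleton] at hb
    rw [hb] at ha
    exact leaf_not_mem_pathTo_mid ha

lemma pmid_prefix_pcenter {i : Fin n} (hi : i.1 < k) :
    pathTo n k (StarV.mid i) <+: pathTo n k (StarV.center : StarV n) := by
  show pathTo n k (StarV.mid i) <+: spine n k ++ [StarV.center]
  simp only [pathTo, if_pos hi]
  exact (spine_prefix (by omega)).trans (List.prefix_append _ _)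

lemma pcenter_prefix_pmid {i : Fin n} (hi : ¬ i.1 < k) :
    pathTo n k (StarV.center : StarV n) <+: pathTo n k (StarV.mid i) := by
  rw [pathTo_mid_ge hi]
  exact List.prefix_append _ _

/-- The treedepth decomposition with spine `b_0 < … < b_{k-1} < a`, the other
`b_j` (with their leaves) hanging below `a`, and each leaf hanging below its mid. -/
def Tk (n k : ℕ) : TDDecomp (subdivStar n) where
  le x y := pathTo n k x <+: pathTo n k y
  le_refl x := List.prefix_refl _
  le_antisymm x y h1 h2 := pathTo_injective (h1.eq_of_length_le h2.length_le)
  le_trans x y z h1 h2 := h1.trans h2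
  down_linear x y z h1 h2 := List.prefix_or_prefix_of_prefix h1 h2
  adj_comparable u v h := by
    rw [subdivStar, SimpleGraph.fromRel_adj] at h
    obtain ⟨-, h⟩ := h
    have hcm : ∀ i : Fin n, pathTo n k (StarV.center : StarV n) <+: pathTo n k (StarV.mid i) ∨
        pathTo n k (StarV.mid i) <+: pathTo n k (StarV.center : StarV n) := by
      intro i
      by_cases hi : i.1 < k
      · exact Or.inr (pmid_prefix_pcenter hi)
      · exact Or.inl (pcenter_prefix_pmid hi)
    have hml : ∀ i : Fin n, pathTo n k (StarV.mid i) <+: pathTo n k (StarV.leaf i) := by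
      intro i
      rw [pathTo_leaf_eq]
      exact List.prefix_append _ _
    rcases h with (⟨i, rfl, rfl⟩ | ⟨i, rfl, rfl⟩) | (⟨i, rfl, rfl⟩ | ⟨i, rfl, rfl⟩)
    · exact hcm i
    · exact Or.inl (hml i)
    · exact (hcm i).symm
    · exact Or.inr (hml i)

lemma Tk_chain_le (w : StarV n → ℕ) {C : Finset (StarV n)} (hC : (Tk n k).IsChain C) :
    ∃ v, C.sum w ≤ ((pathTo n k v).map w).sum := by
  rcases C.eq_empty_or_nonempty with rfl | hne
  · exact ⟨StarV.center, by simp⟩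
  obtain ⟨v, hv, hmax⟩ := C.exists_max_image (fun x => (pathTo n k x).length) hne
  refine ⟨v, ?_⟩
  have hsub : C ⊆ (pathTo n k v).toFinset := by
    intro y hy
    rw [List.mem_toFinset]
    have hyv : pathTo n k y <+: pathTo n k v := by
      rcases hC y hy v hv with h | h
      · exact h
      · rw [h.eq_of_length_le (hmax y hy)]
    exact hyv.sublist.subset (self_mem_pathTo y)
  calc C.sum w ≤ (pathTo n k v).toFinset.sum w := Finset.sum_le_sum_of_subset hsub
    _ = ((pathTo n k v).map w).sum := List.sum_toFinset w (nodup_pathTo v)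

lemma Tk_depth_le (w : StarV n → ℕ) {x : ℕ}
    (h : ∀ v, ((pathTo n k v).map w).sum ≤ x) : (Tk n k).weightedDepth w ≤ x := by
  refine csSup_le ⟨0, ∅, fun a ha => by simp at ha, by simp⟩ ?_
  rintro s ⟨C, hC, rfl⟩
  obtain ⟨v, hv⟩ := Tk_chain_le w hC
  exact hv.trans (h v)

lemma Tk_le_center_iff {j : Fin n} :
    (Tk n k).le (StarV.mid j) StarV.center ↔ j.1 < k := by
  constructor
  · intro h
    by_contra hj
    have hlen := List.IsPrefix.length_le (h : pathTo n k (StarV.mid j) <+: _)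
    rw [pathTo_mid_ge hj] at hlen
    show False
    simp only [pathTo, List.length_append, List.length_singleton] at hlen
    omega
  · intro hj
    exact pmid_prefix_pcenter hj

lemma Tk_leaf_max {l : Fin n} {x : StarV n} (h : (Tk n k).le (StarV.leaf l) x) :
    x = StarV.leaf l := by
  have : StarV.leaf l ∈ pathTo n k x :=
    (h : _ <+: _).sublist.subset (self_mem_pathTo _)
  exact leaf_mem_pathTo this

end TkSec

section Sums
variable {n k : ℕ} (w : StarV n → ℕ)

lemma spine_toFinset {m : ℕ} : (spine n m).toFinset
    = (Finset.univ.filter (fun l : Fin n => l.1 < m)).image StarV.mid := by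
  ext x
  rw [List.mem_toFinset, mem_spine]
  constructor
  · rintro ⟨l, hl, rfl⟩
    exact Finset.mem_image_of_mem _ (Finset.mem_filter.2 ⟨Finset.mem_univ _, hl⟩)
  · intro hx
    obtain ⟨l, hl, rfl⟩ := Finset.mem_image.1 hx
    exact ⟨l, (Finset.mem_filter.1 hl).2, rfl⟩

lemma spine_map_sum {m : ℕ} : ((spine n m).map w).sum
    = ∑ l ∈ Finset.univ.filter (fun l : Fin n => l.1 < m), w (StarV.mid l) := by
  rw [← List.sum_toFinset w nodup_spine, spine_toFinset,
    Finset.sum_image (fun a _ b _ h => by cases h; rfl)]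

end Sums

section Lower
variable {n : ℕ}

lemma adj_center_mid (i : Fin n) : (subdivStar n).Adj StarV.center (StarV.mid i) := by
  rw [subdivStar, SimpleGraph.fromRel_adj]
  exact ⟨(fun h => nomatch h), Or.inl (Or.inl ⟨i, rfl, rfl⟩)⟩

lemma adj_mid_leaf (i : Fin n) : (subdivStar n).Adj (StarV.mid i) (StarV.leaf i) := by
  rw [subdivStar, SimpleGraph.fromRel_adj]
  exact ⟨(fun h => nomatch h), Or.inl (Or.inr ⟨i, rfl, rfl⟩)⟩

lemma chain_le_depth {V : Type*} [Fintype V] {G : SimpleGraph V} (T : TDDecomp G)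
    (w : V → ℕ) {C : Finset V} (hC : T.IsChain C) : C.sum w ≤ T.weightedDepth w := by
  refine le_csSup ⟨Finset.univ.sum w, ?_⟩ ⟨C, hC, rfl⟩
  rintro s ⟨C', -, rfl⟩
  exact Finset.sum_le_sum_of_subset (Finset.subset_univ _)

lemma exists_chain_top {V : Type*} {G : SimpleGraph V} (T : TDDecomp G) :
    ∀ s : Finset V, (∀ x ∈ s, ∀ y ∈ s, T.le x y ∨ T.le y x) → s.Nonempty →
    ∃ m ∈ s, ∀ x ∈ s, T.le x m := by
  classical
  intro s
  induction s using Finset.induction_on with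
  | empty => intro _ h; simp at h
  | @insert a s ha ih =>
    intro hcomp _
    rcases s.eq_empty_or_nonempty with rfl | hs
    · refine ⟨a, by simp, ?_⟩
      intro x hx
      rcases Finset.mem_insert.1 hx with rfl | hx
      · exact T.le_refl x
      · simp at hx
    · obtain ⟨m, hm, hmax⟩ := ih (fun x hx y hy =>
        hcomp x (Finset.mem_insert_of_mem hx) y (Finset.mem_insert_of_mem hy)) hs
      rcases hcomp a (Finset.mem_insert_self a s) m (Finset.mem_insert_of_mem hm) with h | h
      · refine ⟨m, Finset.mem_insert_of_mem hm, ?_⟩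
        intro x hx
        rcases Finset.mem_insert.1 hx with rfl | hx
        · exact h
        · exact hmax x hx
      · refine ⟨a, Finset.mem_insert_self a s, ?_⟩
        intro x hx
        rcases Finset.mem_insert.1 hx with rfl | hx
        · exact T.le_refl x
        · exact T.le_trans x m a (hmax x hx) h

variable (T : TDDecomp (subdivStar n)) (w : StarV n → ℕ)

open Classical in
/-- The set of mid indices strictly below the center. -/
noncomputable def idxI (T : TDDecomp (subdivStar n)) : Finset (Fin n) :=
  Finset.univ.filter (fun l : Fin n => T.le (StarV.mid l) StarV.center)

lemma mem_idxI {l : Fin n} : l ∈ idxI T ↔ T.le (StarV.mid l) StarV.center := by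
  simp [idxI]

lemma center_le_of_not_mem {j : Fin n} (hj : j ∉ idxI T) :
    T.le StarV.center (StarV.mid j) := by
  rcases T.adj_comparable _ _ (adj_center_mid j) with h | h
  · exact h
  · exact absurd ((mem_idxI T).2 h) hj

lemma chain1_isChain : T.IsChain (insert StarV.center ((idxI T).image StarV.mid)) := by
  have hle : ∀ x ∈ (idxI T).image StarV.mid, T.le x StarV.center := by
    intro x hx
    obtain ⟨l, hl, rfl⟩ := Finset.mem_image.1 hx
    exact (mem_idxI T).1 hl
  intro x hx y hy
  rcases Finset.mem_insert.1 hx with rfl | hx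
  · rcases Finset.mem_insert.1 hy with rfl | hy
    · exact Or.inl (T.le_refl _)
    · exact Or.inr (hle y hy)
  · rcases Finset.mem_insert.1 hy with rfl | hy
    · exact Or.inl (hle x hx)
    · exact T.down_linear StarV.center x y (hle x hx) (hle y hy)

lemma center_not_mem_image_mid (s : Finset (Fin n)) :
    (StarV.center : StarV n) ∉ s.image StarV.mid := by
  simp only [Finset.mem_image]
  rintro ⟨l, -, h⟩
  cases h

lemma chain1_sum : (insert StarV.center ((idxI T).image StarV.mid)).sum w
    = w StarV.center + ∑ l ∈ idxI T, w (StarV.mid l) := by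
  rw [Finset.sum_insert (center_not_mem_image_mid _),
    Finset.sum_image (fun a _ b _ h => by cases h; rfl)]

lemma bound1 : (∑ l ∈ idxI T, w (StarV.mid l)) + w StarV.center ≤ T.weightedDepth w := by
  have := chain_le_depth T w (chain1_isChain T)
  rw [chain1_sum] at this
  omega

lemma bound2 {j : Fin n} (hj : j ∉ idxI T) :
    (∑ l ∈ idxI T, w (StarV.mid l)) + w StarV.center + w (StarV.mid j) + w (StarV.leaf j)
      ≤ T.weightedDepth w := by
  set C1 := insert StarV.center ((idxI T).image StarV.mid) with hC1def
  have hcj : T.le StarV.center (StarV.mid j) := center_le_of_not_mem T hj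
  have hup : ∀ x ∈ C1, T.le x (StarV.mid j) := by
    intro x hx
    rcases Finset.mem_insert.1 hx with rfl | hx
    · exact hcj
    · obtain ⟨l, hl, rfl⟩ := Finset.mem_image.1 hx
      exact T.le_trans _ _ _ ((mem_idxI T).1 hl) hcj
  have hup' : ∀ x ∈ insert (StarV.mid j) C1, T.le x (StarV.mid j) := by
    intro x hx
    rcases Finset.mem_insert.1 hx with rfl | hx
    · exact T.le_refl _
    · exact hup x hx
  have hcf : ∀ x ∈ insert (StarV.mid j) C1,
      T.le x (StarV.leaf j) ∨ T.le (StarV.leaf j) x := by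
    intro x hx
    rcases T.adj_comparable _ _ (adj_mid_leaf j) with h | h
    · exact Or.inl (T.le_trans _ _ _ (hup' x hx) h)
    · exact T.down_linear (StarV.mid j) x (StarV.leaf j) (hup' x hx) h
  have hchain : T.IsChain (insert (StarV.leaf j) (insert (StarV.mid j) C1)) := by
    intro x hx y hy
    rcases Finset.mem_insert.1 hx with rfl | hx
    · rcases Finset.mem_insert.1 hy with rfl | hy
      · exact Or.inl (T.le_refl _)
      · exact (hcf y hy).symm
    · rcases Finset.mem_insert.1 hy with rfl | hy
      · exact hcf x hx
      · rcases Finset.mem_insert.1 hx with rfl | hx'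
        · exact Or.inr (hup' y hy)
        · rcases Finset.mem_insert.1 hy with rfl | hy'
          · exact Or.inl (hup x hx')
          · exact chain1_isChain T x hx' y hy'
  have hnm1 : StarV.mid j ∉ C1 := by
    rw [hC1def]
    simp only [Finset.mem_insert, Finset.mem_image]
    push_neg
    refine ⟨(fun h => nomatch h), ?_⟩
    rintro l hl h
    cases h
    exact hj hl
  have hnm2 : StarV.leaf j ∉ insert (StarV.mid j) C1 := by
    rw [hC1def]
    simp only [Finset.mem_insert, Finset.mem_image]
    push_neg
    refine ⟨(fun h => nomatch h), (fun h => nomatch h), ?_⟩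
    rintro l hl h
    cases h
  have hsum : (insert (StarV.leaf j) (insert (StarV.mid j) C1)).sum w
      = w (StarV.leaf j) + (w (StarV.mid j) + (w StarV.center
        + ∑ l ∈ idxI T, w (StarV.mid l))) := by
    rw [Finset.sum_insert hnm2, Finset.sum_insert hnm1, hC1def, chain1_sum]
  have := chain_le_depth T w hchain
  rw [hsum] at this
  omega

lemma bound3 (hc : ∀ i j : Fin n, i ≤ j → w (StarV.leaf j) ≤ w (StarV.leaf i))
    {i : Fin n} (hi : i ∈ idxI T) :
    (∑ l ∈ (idxI T).filter (fun l => l ≤ i), w (StarV.mid l)) + w (StarV.leaf i)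
      ≤ T.weightedDepth w := by
  classical
  set J := (idxI T).filter (fun l => l ≤ i) with hJ
  have hJne : (J.image StarV.mid).Nonempty :=
    ⟨StarV.mid i, Finset.mem_image_of_mem _ (Finset.mem_filter.2 ⟨hi, le_refl i⟩)⟩
  have hJcomp : ∀ x ∈ J.image StarV.mid, ∀ y ∈ J.image StarV.mid,
      T.le x y ∨ T.le y x := by
    intro x hx y hy
    obtain ⟨l, hl, rfl⟩ := Finset.mem_image.1 hx
    obtain ⟨l', hl', rfl⟩ := Finset.mem_image.1 hy
    exact T.down_linear StarV.center _ _
      ((mem_idxI T).1 (Finset.mem_filter.1 hl).1)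
      ((mem_idxI T).1 (Finset.mem_filter.1 hl').1)
  obtain ⟨mx, hmx, hmax⟩ := exists_chain_top T _ hJcomp hJne
  obtain ⟨m, hm, rfl⟩ := Finset.mem_image.1 hmx
  set J' := (idxI T).filter (fun l => T.le (StarV.mid l) (StarV.mid m)) with hJ'
  have hJJ' : J ⊆ J' := by
    intro l hl
    refine Finset.mem_filter.2 ⟨(Finset.mem_filter.1 hl).1, ?_⟩
    exact hmax _ (Finset.mem_image_of_mem _ hl)
  have hup : ∀ x ∈ J'.image StarV.mid, T.le x (StarV.mid m) := by
    intro x hx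
    obtain ⟨l, hl, rfl⟩ := Finset.mem_image.1 hx
    exact (Finset.mem_filter.1 hl).2
  have hchain : T.IsChain (insert (StarV.leaf m) (J'.image StarV.mid)) := by
    have hcf : ∀ x ∈ J'.image StarV.mid,
        T.le x (StarV.leaf m) ∨ T.le (StarV.leaf m) x := by
      intro x hx
      rcases T.adj_comparable _ _ (adj_mid_leaf m) with h | h
      · exact Or.inl (T.le_trans _ _ _ (hup x hx) h)
      · exact T.down_linear (StarV.mid m) x (StarV.leaf m) (hup x hx) h
    intro x hx y hy
    rcases Finset.mem_insert.1 hx with rfl | hx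
    · rcases Finset.mem_insert.1 hy with rfl | hy
      · exact Or.inl (T.le_refl _)
      · exact (hcf y hy).symm
    · rcases Finset.mem_insert.1 hy with rfl | hy
      · exact hcf x hx
      · obtain ⟨l, hl, rfl⟩ := Finset.mem_image.1 hx
        obtain ⟨l', hl', rfl⟩ := Finset.mem_image.1 hy
        exact T.down_linear StarV.center _ _
          ((mem_idxI T).1 (Finset.mem_filter.1 hl).1)
          ((mem_idxI T).1 (Finset.mem_filter.1 hl').1)
  have hsum : (insert (StarV.leaf m) (J'.image StarV.mid)).sum w
      = w (StarV.leaf m) + ∑ l ∈ J', w (StarV.mid l) := by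
    rw [Finset.sum_insert, Finset.sum_image (fun a _ b _ h => by cases h; rfl)]
    simp only [Finset.mem_image]
    rintro ⟨l, -, h⟩
    cases h
  have hdep := chain_le_depth T w hchain
  rw [hsum] at hdep
  have h1 : ∑ l ∈ J, w (StarV.mid l) ≤ ∑ l ∈ J', w (StarV.mid l) :=
    Finset.sum_le_sum_of_subset hJJ'
  have h2 : w (StarV.leaf i) ≤ w (StarV.leaf m) :=
    hc m i (Finset.mem_filter.1 hm).2
  omega

end Lower

section Key
variable {n : ℕ} (w : StarV n → ℕ)

lemma psum_center {k : ℕ} : ((pathTo n k (StarV.center : StarV n)).map w).sum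
    = ((spine n k).map w).sum + w StarV.center := by
  show ((spine n k ++ [StarV.center]).map w).sum = _
  rw [List.map_append, List.sum_append]
  simp

lemma psum_mid_lt {k : ℕ} {i : Fin n} (hi : i.1 < k) :
    ((pathTo n k (StarV.mid i)).map w).sum = ((spine n (i.1 + 1)).map w).sum := by
  simp only [pathTo, if_pos hi]

lemma psum_mid_ge {k : ℕ} {i : Fin n} (hi : ¬ i.1 < k) :
    ((pathTo n k (StarV.mid i)).map w).sum
    = ((spine n k).map w).sum + w StarV.center + w (StarV.mid i) := by
  rw [pathTo_mid_ge hi, List.map_append, List.sum_append, List.map_append, List.sum_append]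
  simp [add_assoc]

lemma psum_leaf {k : ℕ} (i : Fin n) :
    ((pathTo n k (StarV.leaf i)).map w).sum
    = ((pathTo n k (StarV.mid i)).map w).sum + w (StarV.leaf i) := by
  rw [pathTo_leaf_eq, List.map_append, List.sum_append]
  simp

lemma psums_le_depth (T : TDDecomp (subdivStar n)) {k : ℕ}
    (hc : ∀ i j : Fin n, i ≤ j → w (StarV.leaf j) ≤ w (StarV.leaf i))
    (hIk : ∀ l : Fin n, l.1 < k → l ∈ idxI T)
    (hge : ∀ i : Fin n, ¬ i.1 < k →
      ((spine n k).map w).sum + w StarV.center + w (StarV.mid i) + w (StarV.leaf i)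
        ≤ T.weightedDepth w) :
    ∀ v, ((pathTo n k v).map w).sum ≤ T.weightedDepth w := by
  classical
  have hb1 := bound1 T w
  have hSF : ((spine n k).map w).sum ≤ ∑ l ∈ idxI T, w (StarV.mid l) := by
    rw [spine_map_sum]
    exact Finset.sum_le_sum_of_subset (fun l hl => hIk l (Finset.mem_filter.1 hl).2)
  have hlt : ∀ i : Fin n, i.1 < k →
      ((spine n (i.1 + 1)).map w).sum + w (StarV.leaf i) ≤ T.weightedDepth w := by
    intro i hi
    have hiI : i ∈ idxI T := hIk i hi
    have hsub : Finset.univ.filter (fun l : Fin n => l.1 < i.1 + 1)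
        ⊆ (idxI T).filter (fun l => l ≤ i) := by
      intro l hl
      have hl' : l.1 < i.1 + 1 := (Finset.mem_filter.1 hl).2
      exact Finset.mem_filter.2 ⟨hIk l (by omega), Fin.le_def.2 (by omega)⟩
    have h3 := bound3 T w hc hiI
    have : ((spine n (i.1 + 1)).map w).sum
        ≤ ∑ l ∈ (idxI T).filter (fun l => l ≤ i), w (StarV.mid l) := by
      rw [spine_map_sum]
      exact Finset.sum_le_sum_of_subset hsub
    omega
  intro v
  cases v with
  | center =>
    rw [psum_center]
    omega
  | mid i =>
    by_cases hi : i.1 < k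
    · rw [psum_mid_lt w hi]
      have := hlt i hi
      omega
    · rw [psum_mid_ge w hi]
      have := hge i hi
      omega
  | leaf i =>
    rw [psum_leaf]
    by_cases hi : i.1 < k
    · rw [psum_mid_lt w hi]
      exact hlt i hi
    · rw [psum_mid_ge w hi]
      exact hge i hi

lemma exists_good_k
    (hc : ∀ i j : Fin n, i ≤ j → w (StarV.leaf j) ≤ w (StarV.leaf i))
    (T : TDDecomp (subdivStar n)) :
    ∃ k ≤ n, ∀ v, ((pathTo n k v).map w).sum ≤ T.weightedDepth w := by
  classical
  rcases (Finset.univ \ idxI T).eq_empty_or_nonempty with hem | hne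
  · -- every mid index is below the center: take k = n
    have hall : ∀ l : Fin n, l ∈ idxI T := by
      intro l
      by_contra hl
      have : l ∈ Finset.univ \ idxI T := Finset.mem_sdiff.2 ⟨Finset.mem_univ _, hl⟩
      rw [hem] at this
      simp at this
    refine ⟨n, le_refl n, psums_le_depth w T hc (fun l _ => hall l) ?_⟩
    intro i hi
    exact absurd i.2 hi
  · -- take k = min (complement)
    obtain ⟨m, hm, hmin⟩ := Finset.exists_min_image _ id hne
    have hmI : m ∉ idxI T := (Finset.mem_sdiff.1 hm).2
    refine ⟨m.1, le_of_lt m.2, ?_⟩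
    have hIk : ∀ l : Fin n, l.1 < m.1 → l ∈ idxI T := by
      intro l hl
      by_contra hlI
      have := hmin l (Finset.mem_sdiff.2 ⟨Finset.mem_univ _, hlI⟩)
      simp only [id] at this
      rw [Fin.le_def] at this
      omega
    refine psums_le_depth w T hc hIk ?_
    intro i hi
    have hSF : ((spine n m.1).map w).sum ≤ ∑ l ∈ idxI T, w (StarV.mid l) := by
      rw [spine_map_sum]
      exact Finset.sum_le_sum_of_subset (fun l hl => hIk l (Finset.mem_filter.1 hl).2)
    by_cases hiI : i ∈ idxI T
    · -- i is in I but above the spine cut: use bound2 at m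
      have hne' : i ≠ m := fun h => hmI (h ▸ hiI)
      have hmi : m ≤ i := Fin.le_def.2 (by omega)
      have hsub : insert i (Finset.univ.filter (fun l : Fin n => l.1 < m.1)) ⊆ idxI T := by
        intro l hl
        rcases Finset.mem_insert.1 hl with rfl | hl
        · exact hiI
        · exact hIk l (Finset.mem_filter.1 hl).2
      have hins : ((spine n m.1).map w).sum + w (StarV.mid i)
          ≤ ∑ l ∈ idxI T, w (StarV.mid l) := by
        rw [spine_map_sum]
        have h := Finset.sum_le_sum_of_subset (f := fun l => w (StarV.mid l)) hsub
        rw [Finset.sum_insert (by simp [Finset.mem_filter]; omega)] at h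
        omega
      have hleaf : w (StarV.leaf i) ≤ w (StarV.leaf m) := hc m i hmi
      have h2 := bound2 T w hmI
      have hwm : 0 ≤ w (StarV.mid m) := Nat.zero_le _
      omega
    · have h2 := bound2 T w hiI
      omega

end Key

/-- Suppose the leaves are ordered by decreasing weight and, among equal
leaf weights, the middle vertices by increasing weight. Then there is an optimal
treedepth decomposition `T` in which every `c_k` is `≤_T`-maximal and the index set
`I = { i : b_i <_T a }` is an initial segment: for all `i < j`, if `b_j <_T a` then
`b_i <_T a`. -/
theorem stmt8 (n : ℕ) (w : StarV n → ℕ) (hw : ∀ v, 0 < w v)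
    (hc : ∀ i j : Fin n, i ≤ j → w (StarV.leaf j) ≤ w (StarV.leaf i))
    (hb : ∀ i j : Fin n, i ≤ j → w (StarV.leaf i) = w (StarV.leaf j) →
      w (StarV.mid i) ≤ w (StarV.mid j)) :
    ∃ T : TDDecomp (subdivStar n),
      T.weightedDepth w = wtd (subdivStar n) w ∧
      (∀ k : Fin n, ∀ x, T.le (StarV.leaf k) x → x = StarV.leaf k) ∧
      (∀ i j : Fin n, i < j →
        (T.le (StarV.mid j) StarV.center ∧ StarV.mid j ≠ StarV.center) →
        (T.le (StarV.mid i) StarV.center ∧ StarV.mid i ≠ StarV.center)) := by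
  classical
  obtain ⟨k, hkmem, hkmin⟩ := Finset.exists_min_image (Finset.range (n + 1))
      (fun k => (Tk n k).weightedDepth w) ⟨0, by simp⟩
  refine ⟨Tk n k, ?_, fun l x h => Tk_leaf_max h, ?_⟩
  · apply le_antisymm
    · refine le_csInf ⟨(Tk n 0).weightedDepth w, Tk n 0, rfl⟩ ?_
      rintro s ⟨T, rfl⟩
      obtain ⟨k', hk', hall⟩ := exists_good_k w hc T
      exact le_trans (hkmin k' (Finset.mem_range.2 (by omega))) (Tk_depth_le w hall)
    · exact Nat.sInf_le ⟨Tk n k, rfl⟩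
  · intro i j hij hj
    have hjk : j.1 < k := Tk_le_center_iff.1 hj.1
    have hik : i.1 < k := by
      have := Fin.lt_def.1 hij
      omega
    exact ⟨Tk_le_center_iff.2 hik, fun h => by cases h⟩
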